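/- arXiv:1410.7098 — 4 statements merged into one kernel-verified Lean document; each statement's English description precedes it below -/
import Mathlib

section
/- Let H(τ; ρ) = Σ_{r∈R} ρ_r H_r(τ_r) be the reweighted Kikuchi entropy over a finite region graph, where H_r(τ_r) = −Σ_{x_r} τ_r(x_r) log τ_r(x_r). Suppose there exists a nonnegative labeling γ on pairs (s,t) with s ⊊ t, ρ_s < 0, ρ_t > 0, such that Σ_t γ(s,t) = −ρ_s for all s with ρ_s < 0 and Σ_s γ(s,t) ≤ ρ_t for all t with ρ_t > 0. Then on the locally consistent polytope Δ_R^K, H(τ;ρ) can be written as a nonnegative combination of terms −D_KL(τ_t ‖ τ_s) (over pairs s ⊊ t, marginalization-consistent) plus nonnegative multiples of entropies H_t(τ_t), and hence H(τ;ρ) is concave on Δ_R^K. -/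
open scoped Classical

noncomputable section

variable {V 𝒳 : Type*}

/-- Restriction of a configuration on region `t` to region `s` (for `s ⊆ t`;
outside `t` an arbitrary value is used). -/
def restr [Nonempty 𝒳] (s t : Finset V) (z : ↥t → 𝒳) : ↥s → 𝒳 :=
  fun a => if h : (a : V) ∈ t then z ⟨a, h⟩ else Classical.arbitrary 𝒳

/-- The locally consistent pseudomarginal polytope `Δ_R^K` over a region graph `R`:
each `τ_r` (`r ∈ R`) is a probability distribution on `𝒳^r`, and the distributions are
consistent under marginalization for all pairs `s ⊆ t` in `R`. -/
def Delta [Fintype V] [Fintype 𝒳] [Nonempty 𝒳] (R : Finset (Finset V)) :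
    Set (∀ r : Finset V, (↥r → 𝒳) → ℝ) :=
  {τ | ∀ r ∈ R, (∀ y, 0 ≤ τ r y) ∧ (∑ y, τ r y = 1) ∧
      ∀ s ∈ R, s ⊆ r → ∀ y,
        τ s y = ∑ z ∈ Finset.univ.filter (fun z => restr s r z = y), τ r z}

/-- The reweighted Kikuchi entropy `H(τ; ρ) = Σ_{r ∈ R} ρ_r H_r(τ_r)`. -/
def kikuchiEntropy [Fintype V] [Fintype 𝒳] (R : Finset (Finset V))
    (ρ : Finset V → ℝ) (τ : ∀ r : Finset V, (↥r → 𝒳) → ℝ) : ℝ :=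
  ∑ r ∈ R, ρ r * (-∑ y, τ r y * Real.log (τ r y))

/-- The KL divergence `D_KL(τ_t ‖ τ_s) = Σ_{x_t} τ_t(x_t) log (τ_t(x_t) / τ_s(x_s))`
between the marginals on `t` and on `s ⊆ t`. -/
def klTerm [Fintype V] [Fintype 𝒳] [Nonempty 𝒳] (s t : Finset V)
    (τ : ∀ r : Finset V, (↥r → 𝒳) → ℝ) : ℝ :=
  ∑ z, τ t z * Real.log (τ t z / τ s (restr s t z))

/- ### Auxiliary lemmas -/

lemma mul_log_combo (a b p q : ℝ) (hp : 0 ≤ p) (hq : 0 ≤ q) (ha : 0 ≤ a) (hb : 0 ≤ b)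
    (hab : a + b = 1) :
    (a * p + b * q) * Real.log (a * p + b * q) ≤ a * (p * Real.log p) + b * (q * Real.log q) := by
  have h := Real.convexOn_mul_log.2 (Set.mem_Ici.2 hp) (Set.mem_Ici.2 hq) ha hb hab
  simpa [smul_eq_mul] using h

/-- Two-point log-sum inequality. -/
lemma logsum2 (p1 p2 q1 q2 : ℝ) (hp1 : 0 ≤ p1) (hp2 : 0 ≤ p2) (hq1 : 0 ≤ q1) (hq2 : 0 ≤ q2)
    (h1 : q1 = 0 → p1 = 0) (h2 : q2 = 0 → p2 = 0) :
    (p1 + p2) * Real.log ((p1 + p2) / (q1 + q2)) ≤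
      p1 * Real.log (p1 / q1) + p2 * Real.log (p2 / q2) := by
  rcases eq_or_lt_of_le hq1 with hq1' | hq1'
  · have hp1' := h1 hq1'.symm
    subst hp1'
    rw [← hq1']
    simp
  rcases eq_or_lt_of_le hq2 with hq2' | hq2'
  · have hp2' := h2 hq2'.symm
    subst hp2'
    rw [← hq2']
    simp
  · set Q := q1 + q2 with hQdef
    have hQ : 0 < Q := by positivity
    have hx1 : (0:ℝ) ≤ p1 / q1 := div_nonneg hp1 hq1
    have hx2 : (0:ℝ) ≤ p2 / q2 := div_nonneg hp2 hq2
    have hw1 : (0:ℝ) ≤ q1 / Q := by positivity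
    have hw2 : (0:ℝ) ≤ q2 / Q := by positivity
    have hw : q1 / Q + q2 / Q = 1 := by field_simp; exact hQdef.symm
    have h := Real.convexOn_mul_log.2 (Set.mem_Ici.2 hx1) (Set.mem_Ici.2 hx2) hw1 hw2 hw
    simp only [smul_eq_mul] at h
    have key : q1 / Q * (p1 / q1) + q2 / Q * (p2 / q2) = (p1 + p2) / Q := by
      field_simp
    rw [key] at h
    have h' := mul_le_mul_of_nonneg_left h hQ.le
    calc (p1 + p2) * Real.log ((p1 + p2) / Q)
        = Q * ((p1 + p2) / Q * Real.log ((p1 + p2) / Q)) := by field_simp; try ring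
      _ ≤ Q * (q1 / Q * (p1 / q1 * Real.log (p1 / q1)) +
            q2 / Q * (p2 / q2 * Real.log (p2 / q2))) := h'
      _ = p1 * Real.log (p1 / q1) + p2 * Real.log (p2 / q2) := by field_simp; try ring

section region
variable [Fintype V] [Fintype 𝒳] [Nonempty 𝒳]

lemma dominate {R : Finset (Finset V)} {τ : ∀ r : Finset V, (↥r → 𝒳) → ℝ}
    (hτ : τ ∈ Delta (𝒳 := 𝒳) R) {s t : Finset V} (hs : s ∈ R) (ht : t ∈ R) (hst : s ⊆ t)
    (z : ↥t → 𝒳) : τ t z ≤ τ s (restr s t z) := by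
  obtain ⟨hpos, -, hcons⟩ := hτ t ht
  rw [hcons s hs hst (restr s t z)]
  exact Finset.single_le_sum (fun i _ => hpos i)
    (Finset.mem_filter.2 ⟨Finset.mem_univ _, rfl⟩)

/-- On the locally consistent polytope, `D_KL(τ_t ‖ τ_s) = H_s(τ_s) − H_t(τ_t)`. -/
lemma klTerm_eq {R : Finset (Finset V)} {τ : ∀ r : Finset V, (↥r → 𝒳) → ℝ}
    (hτ : τ ∈ Delta (𝒳 := 𝒳) R) {s t : Finset V} (hs : s ∈ R) (ht : t ∈ R) (hst : s ⊆ t) :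
    klTerm s t τ =
      (∑ z, τ t z * Real.log (τ t z)) - ∑ y, τ s y * Real.log (τ s y) := by
  obtain ⟨hpos, -, hcons⟩ := hτ t ht
  have step1 : klTerm s t τ =
      (∑ z, τ t z * Real.log (τ t z)) - ∑ z, τ t z * Real.log (τ s (restr s t z)) := by
    unfold klTerm
    rw [← Finset.sum_sub_distrib]
    refine Finset.sum_congr rfl fun z _ => ?_
    by_cases h : τ t z = 0
    · simp [h]
    · have hz : 0 < τ t z := lt_of_le_of_ne (hpos z) (Ne.symm h)
      have hsz : 0 < τ s (restr s t z) := lt_of_lt_of_le hz (dominate hτ hs ht hst z)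
      rw [Real.log_div (ne_of_gt hz) (ne_of_gt hsz)]
      ring
  rw [step1]
  congr 1
  rw [← Finset.sum_fiberwise Finset.univ (restr s t)
    (fun z => τ t z * Real.log (τ s (restr s t z)))]
  refine Finset.sum_congr rfl fun y _ => ?_
  rw [Finset.sum_congr rfl (fun z hz => by
    rw [(Finset.mem_filter.1 hz).2] :
    ∀ z ∈ Finset.univ.filter (fun z => restr s t z = y),
      τ t z * Real.log (τ s (restr s t z)) = τ t z * Real.log (τ s y)),
    ← Finset.sum_mul, ← hcons s hs hst y]

/-- `Δ_R^K` is closed under convex combinations. -/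
lemma delta_combo {R : Finset (Finset V)} {τ σ : ∀ r : Finset V, (↥r → 𝒳) → ℝ}
    (hτ : τ ∈ Delta (𝒳 := 𝒳) R) (hσ : σ ∈ Delta (𝒳 := 𝒳) R) {a b : ℝ}
    (ha : 0 ≤ a) (hb : 0 ≤ b) (hab : a + b = 1) :
    (a • τ + b • σ) ∈ Delta (𝒳 := 𝒳) R := by
  intro r hr
  obtain ⟨h1, h2, h3⟩ := hτ r hr
  obtain ⟨g1, g2, g3⟩ := hσ r hr
  refine ⟨fun y => ?_, ?_, ?_⟩
  · simp only [Pi.add_apply, Pi.smul_apply, smul_eq_mul]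
    exact add_nonneg (mul_nonneg ha (h1 y)) (mul_nonneg hb (g1 y))
  · simp only [Pi.add_apply, Pi.smul_apply, smul_eq_mul]
    rw [Finset.sum_add_distrib, ← Finset.mul_sum, ← Finset.mul_sum, h2, g2]
    simpa using hab
  · intro s hsR hsr y
    simp only [Pi.add_apply, Pi.smul_apply, smul_eq_mul]
    rw [h3 s hsR hsr y, g3 s hsR hsr y, Finset.sum_add_distrib, Finset.mul_sum, Finset.mul_sum]

/-- `klTerm` is jointly convex along segments of `Δ_R^K`. -/
lemma kl_combo {R : Finset (Finset V)} {τ σ : ∀ r : Finset V, (↥r → 𝒳) → ℝ}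
    (hτ : τ ∈ Delta (𝒳 := 𝒳) R) (hσ : σ ∈ Delta (𝒳 := 𝒳) R) {s t : Finset V}
    (hs : s ∈ R) (ht : t ∈ R) (hst : s ⊆ t) {a b : ℝ}
    (ha : 0 ≤ a) (hb : 0 ≤ b) (hab : a + b = 1) :
    klTerm s t (a • τ + b • σ) ≤ a * klTerm s t τ + b * klTerm s t σ := by
  unfold klTerm
  rw [Finset.mul_sum, Finset.mul_sum, ← Finset.sum_add_distrib]
  refine Finset.sum_le_sum fun z _ => ?_
  simp only [Pi.add_apply, Pi.smul_apply, smul_eq_mul]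
  have hposτt := (hτ t ht).1
  have hposσt := (hσ t ht).1
  have hposτs := (hτ s hs).1
  have hposσs := (hσ s hs).1
  have hd1 : a * τ s (restr s t z) = 0 → a * τ t z = 0 := by
    intro h
    rcases mul_eq_zero.1 h with h | h
    · rw [h, zero_mul]
    · have : τ t z = 0 :=
        le_antisymm (h ▸ dominate hτ hs ht hst z) (hposτt z)
      rw [this, mul_zero]
  have hd2 : b * σ s (restr s t z) = 0 → b * σ t z = 0 := by
    intro h
    rcases mul_eq_zero.1 h with h | h
    · rw [h, zero_mul]
    · have : σ t z = 0 :=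
        le_antisymm (h ▸ dominate hσ hs ht hst z) (hposσt z)
      rw [this, mul_zero]
  have h := logsum2 (a * τ t z) (b * σ t z) (a * τ s (restr s t z)) (b * σ s (restr s t z))
    (mul_nonneg ha (hposτt z)) (mul_nonneg hb (hposσt z))
    (mul_nonneg ha (hposτs _)) (mul_nonneg hb (hposσs _)) hd1 hd2
  have e1 : (a * τ t z) * Real.log ((a * τ t z) / (a * τ s (restr s t z))) =
      a * (τ t z * Real.log (τ t z / τ s (restr s t z))) := by
    rcases eq_or_lt_of_le ha with h0 | h0
    · simp [← h0]
    · rw [mul_div_mul_left _ _ (ne_of_gt h0)]; ring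
  have e2 : (b * σ t z) * Real.log ((b * σ t z) / (b * σ s (restr s t z))) =
      b * (σ t z * Real.log (σ t z / σ s (restr s t z))) := by
    rcases eq_or_lt_of_le hb with h0 | h0
    · simp [← h0]
    · rw [mul_div_mul_left _ _ (ne_of_gt h0)]; ring
  rw [e1, e2] at h
  exact h

end region

/-- If there is a nonnegative labeling `γ` on pairs `s ⊊ t` with `ρ_s < 0 < ρ_t`, row sums
`−ρ_s` and column sums at most `ρ_t`, then on `Δ_R^K` the Kikuchi entropy `H(τ; ρ)` is a
nonnegative combination of terms `−D_KL(τ_t ‖ τ_s)` plus nonnegative multiples of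
entropies `H_t(τ_t)`, and hence `H(·; ρ)` is concave on `Δ_R^K`. -/
theorem stmt14 [Fintype V] [Fintype 𝒳] [Nonempty 𝒳]
    (R : Finset (Finset V)) (ρ : Finset V → ℝ) (γ : Finset V × Finset V → ℝ)
    (hγ0 : ∀ p, 0 ≤ γ p)
    (hsupp : ∀ s t, γ (s, t) ≠ 0 → s ∈ R ∧ t ∈ R ∧ s ⊂ t ∧ ρ s < 0 ∧ 0 < ρ t)
    (hrow : ∀ s ∈ R, ρ s < 0 → ∑ t ∈ R, γ (s, t) = -ρ s)
    (hcol : ∀ t ∈ R, 0 < ρ t → ∑ s ∈ R, γ (s, t) ≤ ρ t) :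
    (∃ c : Finset V → ℝ, (∀ t, 0 ≤ c t) ∧
      ∀ τ ∈ Delta (𝒳 := 𝒳) R,
        kikuchiEntropy R ρ τ =
          (∑ s ∈ R, ∑ t ∈ R, γ (s, t) * (-(klTerm s t τ))) +
            ∑ t ∈ R, c t * (-∑ y, τ t y * Real.log (τ t y))) ∧
    ConcaveOn ℝ (Delta (𝒳 := 𝒳) R) (kikuchiEntropy R ρ) := by
  set c : Finset V → ℝ := fun r =>
    if r ∈ R then ρ r + (∑ t ∈ R, γ (r, t)) - (∑ s ∈ R, γ (s, r)) else 0 with hc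
  have hc0 : ∀ t, 0 ≤ c t := by
    intro r
    by_cases hr : r ∈ R
    · simp only [hc, if_pos hr]
      rcases lt_trichotomy (ρ r) 0 with h | h | h
      · have hrowr := hrow r hr h
        have hz : ∑ s ∈ R, γ (s, r) = 0 := Finset.sum_eq_zero fun s _ => by
          by_contra hne
          exact absurd ((hsupp s r hne).2.2.2.2) (by linarith)
        rw [hrowr, hz]
        linarith
      · have hz1 : ∑ t ∈ R, γ (r, t) = 0 := Finset.sum_eq_zero fun t _ => by
          by_contra hne
          exact absurd ((hsupp r t hne).2.2.2.1) (by linarith)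
        have hz2 : ∑ s ∈ R, γ (s, r) = 0 := Finset.sum_eq_zero fun s _ => by
          by_contra hne
          exact absurd ((hsupp s r hne).2.2.2.2) (by linarith)
        rw [hz1, hz2, h]
        norm_num
      · have hz1 : ∑ t ∈ R, γ (r, t) = 0 := Finset.sum_eq_zero fun t _ => by
          by_contra hne
          exact absurd ((hsupp r t hne).2.2.2.1) (by linarith)
        have hcolr := hcol r hr h
        rw [hz1]
        linarith
    · simp [hc, if_neg hr]
  have hdec : ∀ τ ∈ Delta (𝒳 := 𝒳) R,
      kikuchiEntropy R ρ τ =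
        (∑ s ∈ R, ∑ t ∈ R, γ (s, t) * (-(klTerm s t τ))) +
          ∑ t ∈ R, c t * (-∑ y, τ t y * Real.log (τ t y)) := by
    intro τ hτ
    set E : Finset V → ℝ := fun r => -∑ y, τ r y * Real.log (τ r y) with hE
    have key : ∀ s ∈ R, ∀ t ∈ R, γ (s, t) * (-(klTerm s t τ)) = γ (s, t) * (E t - E s) := by
      intro s hs t ht
      by_cases h : γ (s, t) = 0
      · rw [h, zero_mul, zero_mul]
      · obtain ⟨-, -, hsub, -, -⟩ := hsupp s t h
        rw [klTerm_eq hτ hs ht hsub.subset]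
        simp only [hE]
        ring_nf
    calc kikuchiEntropy R ρ τ = ∑ r ∈ R, ρ r * E r := rfl
      _ = ∑ t ∈ R, ((∑ s ∈ R, γ (s, t)) * E t - (∑ t' ∈ R, γ (t, t')) * E t
            + c t * E t) := by
        refine Finset.sum_congr rfl fun t ht => ?_
        simp only [hc, if_pos ht]
        ring
      _ = (∑ t ∈ R, (∑ s ∈ R, γ (s, t)) * E t) - (∑ t ∈ R, (∑ t' ∈ R, γ (t, t')) * E t)
            + ∑ t ∈ R, c t * E t := by
        rw [Finset.sum_add_distrib, Finset.sum_sub_distrib]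
      _ = (∑ s ∈ R, ∑ t ∈ R, γ (s, t) * (E t - E s)) + ∑ t ∈ R, c t * E t := by
        congr 1
        have e1 : ∑ t ∈ R, (∑ s ∈ R, γ (s, t)) * E t = ∑ s ∈ R, ∑ t ∈ R, γ (s, t) * E t := by
          rw [Finset.sum_comm]
          exact Finset.sum_congr rfl fun t _ => Finset.sum_mul _ _ _
        have e2 : ∑ t ∈ R, (∑ t' ∈ R, γ (t, t')) * E t =
            ∑ s ∈ R, ∑ t ∈ R, γ (s, t) * E s := by
          exact Finset.sum_congr rfl fun t _ => Finset.sum_mul _ _ _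
        rw [e1, e2, ← Finset.sum_sub_distrib]
        refine Finset.sum_congr rfl fun s _ => ?_
        rw [← Finset.sum_sub_distrib]
        exact Finset.sum_congr rfl fun t _ => by ring
      _ = (∑ s ∈ R, ∑ t ∈ R, γ (s, t) * (-(klTerm s t τ))) + ∑ t ∈ R, c t * E t := by
        congr 1
        exact (Finset.sum_congr rfl fun s hs =>
          Finset.sum_congr rfl fun t ht => (key s hs t ht).symm)
  refine ⟨⟨c, hc0, hdec⟩, ?_⟩
  constructor
  · intro x hx y hy a b ha hb hab
    exact delta_combo hx hy ha hb hab
  · intro x hx y hy a b ha hb hab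
    have hmem := delta_combo hx hy ha hb hab
    simp only [smul_eq_mul]
    rw [hdec x hx, hdec y hy, hdec _ hmem]
    set μ := a • x + b • y with hμ
    have hS : a * (∑ s ∈ R, ∑ t ∈ R, γ (s, t) * (-(klTerm s t x)))
        + b * (∑ s ∈ R, ∑ t ∈ R, γ (s, t) * (-(klTerm s t y)))
        ≤ ∑ s ∈ R, ∑ t ∈ R, γ (s, t) * (-(klTerm s t μ)) := by
      rw [Finset.mul_sum, Finset.mul_sum, ← Finset.sum_add_distrib]
      refine Finset.sum_le_sum fun s hsR => ?_
      rw [Finset.mul_sum, Finset.mul_sum, ← Finset.sum_add_distrib]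
      refine Finset.sum_le_sum fun t htR => ?_
      by_cases h : γ (s, t) = 0
      · simp [h]
      · obtain ⟨-, -, hsub, -, -⟩ := hsupp s t h
        have hk := kl_combo hx hy hsR htR hsub.subset ha hb hab
        have := mul_le_mul_of_nonneg_left hk (hγ0 (s, t))
        nlinarith [this]
    have hT : a * (∑ t ∈ R, c t * (-∑ y', x t y' * Real.log (x t y')))
        + b * (∑ t ∈ R, c t * (-∑ y', y t y' * Real.log (y t y')))
        ≤ ∑ t ∈ R, c t * (-∑ y', μ t y' * Real.log (μ t y')) := by
      rw [Finset.mul_sum, Finset.mul_sum, ← Finset.sum_add_distrib]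
      refine Finset.sum_le_sum fun t htR => ?_
      have hent : ∑ y', μ t y' * Real.log (μ t y')
          ≤ a * (∑ y', x t y' * Real.log (x t y')) + b * (∑ y', y t y' * Real.log (y t y')) := by
        rw [Finset.mul_sum, Finset.mul_sum, ← Finset.sum_add_distrib]
        refine Finset.sum_le_sum fun y' _ => ?_
        have : μ t y' = a * x t y' + b * y t y' := by
          simp [hμ, Pi.add_apply, Pi.smul_apply, smul_eq_mul]
        rw [this]
        exact mul_log_combo a b (x t y') (y t y') ((hx t htR).1 y') ((hy t htR).1 y') ha hb hab
      have := mul_le_mul_of_nonneg_left hent (hc0 t)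
      nlinarith [this]
    linarith
  done

end
end

section
/- In a two-layer region graph (Bethe case) with vertex set V and factor set F (each α ∈ F a subset of V with |α| ≥ 2), if ρ_α ≥ 0 for all α ∈ F and Σ_{s∈U} ρ_s + Σ_{α∈F : α∩U≠∅} ρ_α ≥ 0 for all U ⊆ V, then the Kikuchi sufficient condition Σ_{r ∈ F(S)} ρ_r ≥ 0 holds for all subsets S of R = V ∪ F, where F(S) is the upward closure of S under inclusion. -/
open scoped Classical

/-- In a two-layer region graph (Bethe case) with vertices `V` and factors `F` (each of size
at least 2), if `ρ_α ≥ 0` for all factors and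
`Σ_{s ∈ U} ρ_s + Σ_{α ∩ U ≠ ∅} ρ_α ≥ 0` for all `U ⊆ V`, then the general Kikuchi
sufficient condition `Σ_{r ∈ F(S)} ρ_r ≥ 0` holds for every subset `S` of `R = V ∪ F`,
where `F(S)` is the upward closure of `S` under inclusion. -/
theorem stmt16 {V : Type*} [Fintype V] [DecidableEq V] (F : Finset (Finset V))
    (hF : ∀ α ∈ F, 2 ≤ α.card) (ρ : Finset V → ℝ)
    (h1 : ∀ α ∈ F, 0 ≤ ρ α)
    (h2 : ∀ U : Finset V,
      0 ≤ ∑ s ∈ U, ρ {s} + ∑ α ∈ F.filter (fun α => (α ∩ U).Nonempty), ρ α) :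
    ∀ S ⊆ (Finset.univ.image (fun s : V => ({s} : Finset V)) ∪ F),
      0 ≤ ∑ r ∈ (Finset.univ.image (fun s : V => ({s} : Finset V)) ∪ F).filter
            (fun r => ∃ s ∈ S, s ⊆ r), ρ r := by
  intro S hS
  set f : V → Finset V := fun s => ({s} : Finset V) with hf
  set U : Finset V := Finset.univ.filter (fun s => f s ∈ S) with hU
  -- every element of S is nonempty
  have hSne : ∀ t ∈ S, t.Nonempty := by
    intro t ht
    have := hS ht
    rcases Finset.mem_union.1 this with h | h
    · rcases Finset.mem_image.1 h with ⟨s, _, rfl⟩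
      exact ⟨s, Finset.mem_singleton_self s⟩
    · have := hF t h
      exact Finset.card_pos.1 (by omega)
  have hsplit : (Finset.univ.image f ∪ F).filter (fun r => ∃ s ∈ S, s ⊆ r)
      = (Finset.univ.image f).filter (fun r => ∃ s ∈ S, s ⊆ r)
        ∪ F.filter (fun r => ∃ s ∈ S, s ⊆ r) := Finset.filter_union _ _ _
  have hdisj : Disjoint ((Finset.univ.image f).filter (fun r => ∃ s ∈ S, s ⊆ r))
      (F.filter (fun r => ∃ s ∈ S, s ⊆ r)) := by
    rw [Finset.disjoint_left]
    intro r hr1 hr2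
    rcases Finset.mem_image.1 (Finset.mem_filter.1 hr1).1 with ⟨s, _, rfl⟩
    have := hF _ (Finset.mem_filter.1 hr2).1
    simp [f] at this
  have himg : (Finset.univ.image f).filter (fun r => ∃ s ∈ S, s ⊆ r) = U.image f := by
    ext r
    simp only [Finset.mem_filter, Finset.mem_image, hU, Finset.mem_univ, true_and]
    constructor
    · rintro ⟨⟨s, rfl⟩, t, htS, hts⟩
      have ht : t = f s := by
        rcases Finset.subset_singleton_iff.1 hts with rfl | rfl
        · exact absurd (hSne _ htS) (by simp)
        · rfl
      exact ⟨s, ht ▸ htS, rfl⟩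
    · rintro ⟨s, hs, rfl⟩
      exact ⟨⟨s, rfl⟩, f s, hs, Finset.Subset.refl _⟩
  have hinj : ∀ x ∈ U, ∀ y ∈ U, f x = f y → x = y := by
    intro x _ y _ hxy
    simpa [f] using hxy
  have hsub : F.filter (fun α => (α ∩ U).Nonempty) ⊆ F.filter (fun r => ∃ s ∈ S, s ⊆ r) := by
    intro α hα
    rcases Finset.mem_filter.1 hα with ⟨hαF, x, hx⟩
    rcases Finset.mem_inter.1 hx with ⟨hxα, hxU⟩
    refine Finset.mem_filter.2 ⟨hαF, f x, (Finset.mem_filter.1 hxU).2, ?_⟩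
    simpa [f] using hxα
  have hle : ∑ α ∈ F.filter (fun α => (α ∩ U).Nonempty), ρ α
      ≤ ∑ α ∈ F.filter (fun r => ∃ s ∈ S, s ⊆ r), ρ α := by
    apply Finset.sum_le_sum_of_subset_of_nonneg hsub
    intro α hα _
    exact h1 α (Finset.mem_filter.1 hα).1
  calc (0:ℝ) ≤ ∑ s ∈ U, ρ {s} + ∑ α ∈ F.filter (fun α => (α ∩ U).Nonempty), ρ α := h2 U
    _ ≤ ∑ s ∈ U, ρ {s} + ∑ α ∈ F.filter (fun r => ∃ s ∈ S, s ⊆ r), ρ α := by linarith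
    _ = ∑ r ∈ (Finset.univ.image f).filter (fun r => ∃ s ∈ S, s ⊆ r), ρ r
        + ∑ α ∈ F.filter (fun r => ∃ s ∈ S, s ⊆ r), ρ α := by
        rw [himg, Finset.sum_image hinj]
    _ = _ := by rw [hsplit, Finset.sum_union hdisj]
end

section
/- If the Bethe entropy H(τ;ρ) = Σ_{s∈V} ρ_s H_s(τ_s) + Σ_{α∈F} ρ_α H_α(τ_α) is concave over the locally consistent polytope Δ_R^K of a two-layer binary region graph, then ρ_α ≥ 0 for every factor α ∈ F. -/
open scoped Classical

section Aux

variable {V : Type*} [Fintype V] [DecidableEq V]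

private lemma bethe_card_filter_flip (β : Finset V) (s : ↥β) (x : Bool) :
    (Finset.univ.filter (fun z : ↥β → Bool => z s = x)).card
      = (Finset.univ.filter (fun z : ↥β → Bool => z s = !x)).card := by
  apply Finset.card_nbij' (fun z => Function.update z s (!(z s)))
      (fun z => Function.update z s (!(z s)))
  · intro z hz
    simp only [Finset.mem_coe, Finset.mem_filter, Finset.mem_univ, true_and] at hz ⊢
    simp [hz]
  · intro z hz
    simp only [Finset.mem_coe, Finset.mem_filter, Finset.mem_univ, true_and] at hz ⊢
    simp [hz]
  · intro z _
    funext t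
    rcases eq_or_ne t s with rfl | h
    · simp
    · simp [Function.update_of_ne h]
  · intro z _
    funext t
    rcases eq_or_ne t s with rfl | h
    · simp
    · simp [Function.update_of_ne h]

private lemma bethe_sum_const_filter_half (β : Finset V) (s : ↥β) (x : Bool) (c : ℝ) :
    ∑ z ∈ Finset.univ.filter (fun z : ↥β → Bool => z s = x), c
      = (∑ _z : ↥β → Bool, c) / 2 := by
  have h1 := Finset.sum_filter_add_sum_filter_not Finset.univ
      (fun z : ↥β → Bool => z s = x) (fun _ => c)
  have h2 : Finset.univ.filter (fun z : ↥β → Bool => ¬ z s = x)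
      = Finset.univ.filter (fun z : ↥β → Bool => z s = !x) := by
    apply Finset.filter_congr
    intro z _
    cases x <;> cases h : z s <;> simp
  have h3 : ∑ z ∈ Finset.univ.filter (fun z : ↥β → Bool => z s = x), c
      = ∑ z ∈ Finset.univ.filter (fun z : ↥β → Bool => z s = !x), c := by
    rw [Finset.sum_const, Finset.sum_const, bethe_card_filter_flip]
  rw [h2, ← h3] at h1
  linarith

private lemma bethe_unif_sum (β : Finset V) :
    ∑ _z : ↥β → Bool, ((Fintype.card (↥β → Bool) : ℝ))⁻¹ = 1 := by
  rw [Finset.sum_const, Finset.card_univ, nsmul_eq_mul]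
  exact mul_inv_cancel₀ (Nat.cast_ne_zero.mpr Fintype.card_ne_zero)

end Aux

/-- Necessity of factor-weight nonnegativity: if the Bethe entropy
`H(τ; ρ) = Σ_{s ∈ V} ρ_s H_s(τ_s) + Σ_{α ∈ F} ρ_α H_α(τ_α)` is concave over the locally
consistent polytope `Δ_R^K` of a two-layer binary region graph, then `ρ_α ≥ 0` for every
factor `α ∈ F`. -/
theorem stmt17 {V : Type*} [Fintype V] [DecidableEq V] (F : Finset (Finset V))
    (hF : ∀ α ∈ F, 2 ≤ α.card) (ρv : V → ℝ) (ρf : Finset V → ℝ)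
    (hconc : ConcaveOn ℝ
      {τ : (V → Bool → ℝ) × (∀ α : Finset V, (↥α → Bool) → ℝ) |
        (∀ s, (∀ x, 0 ≤ τ.1 s x) ∧ ∑ x, τ.1 s x = 1) ∧
        ∀ α ∈ F, (∀ z, 0 ≤ τ.2 α z) ∧ (∑ z, τ.2 α z = 1) ∧
          ∀ s : ↥α, ∀ x, τ.1 s.1 x =
            ∑ z ∈ Finset.univ.filter (fun z : ↥α → Bool => z s = x), τ.2 α z}
      (fun τ =>
        ∑ s, ρv s * (-∑ x, τ.1 s x * Real.log (τ.1 s x)) +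
          ∑ α ∈ F, ρf α * (-∑ z, τ.2 α z * Real.log (τ.2 α z)))) :
    ∀ α ∈ F, 0 ≤ ρf α := by
  intro α hα
  obtain ⟨s₀, hs₀, s₁, hs₁, hne⟩ := Finset.one_lt_card.mp (hF α hα)
  -- the uniform singleton marginals and uniform factor marginals
  set u : V → Bool → ℝ := fun _ _ => 1/2 with hu
  set p : ∀ β : Finset V, (↥β → Bool) → ℝ :=
    fun β _ => ((Fintype.card (↥β → Bool) : ℝ))⁻¹ with hp
  -- the factor marginal concentrated on the two constant configurations
  set q : (↥α → Bool) → ℝ :=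
    fun z => if z = (fun _ => true) ∨ z = (fun _ => false) then 1/2 else 0 with hq
  have hcts : ((fun _ => true) : ↥α → Bool) ≠ (fun _ => false) := by
    intro h
    exact absurd (congrFun h ⟨s₀, hs₀⟩) (by simp)
  have q_nonneg : ∀ z, 0 ≤ q z := by
    intro z
    simp only [hq]
    split <;> norm_num
  have q_sum : ∑ z, q z = 1 := by
    rw [hq, ← Finset.sum_filter]
    have hfe : Finset.univ.filter
        (fun z : ↥α → Bool => z = (fun _ => true) ∨ z = (fun _ => false))
        = {(fun _ => true), (fun _ => false)} := by
      ext z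
      simp
    rw [hfe, Finset.sum_pair hcts]
    norm_num
  have q_marg : ∀ (s : ↥α) (x : Bool),
      ∑ z ∈ Finset.univ.filter (fun z : ↥α → Bool => z s = x), q z = 1/2 := by
    intro s x
    rw [hq, ← Finset.sum_filter]
    have hfe : ((Finset.univ.filter (fun z : ↥α → Bool => z s = x)).filter
        (fun z => z = (fun _ => true) ∨ z = (fun _ => false)))
        = {(fun _ => x : ↥α → Bool)} := by
      ext z
      simp only [Finset.mem_filter, Finset.mem_univ, true_and, Finset.mem_singleton]
      constructor
      · rintro ⟨hzs, rfl | rfl⟩ <;> (funext t; exact hzs)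
      · rintro rfl
        refine ⟨rfl, ?_⟩
        cases x
        · right; rfl
        · left; rfl
    rw [hfe, Finset.sum_singleton]
  have p_nonneg : ∀ (β : Finset V) (z : ↥β → Bool), 0 ≤ p β z := by
    intro β z
    rw [hp]
    positivity
  have p_marg : ∀ (β : Finset V) (s : ↥β) (x : Bool),
      ∑ z ∈ Finset.univ.filter (fun z : ↥β → Bool => z s = x), p β z = 1/2 := by
    intro β s x
    rw [hp]
    rw [bethe_sum_const_filter_half, bethe_unif_sum]
  have u_single : ∀ s : V, (∀ x, 0 ≤ u s x) ∧ ∑ x, u s x = 1 := by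
    intro s
    constructor
    · intro x; rw [hu]; norm_num
    · simp [hu]
  -- the two points of the polytope
  set P : (V → Bool → ℝ) × (∀ β : Finset V, (↥β → Bool) → ℝ) := (u, p) with hP
  set Q : (V → Bool → ℝ) × (∀ β : Finset V, (↥β → Bool) → ℝ) :=
    (u, Function.update p α q) with hQ
  have hPmem : P ∈ {τ : (V → Bool → ℝ) × (∀ α : Finset V, (↥α → Bool) → ℝ) |
      (∀ s, (∀ x, 0 ≤ τ.1 s x) ∧ ∑ x, τ.1 s x = 1) ∧
      ∀ α ∈ F, (∀ z, 0 ≤ τ.2 α z) ∧ (∑ z, τ.2 α z = 1) ∧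
        ∀ s : ↥α, ∀ x, τ.1 s.1 x =
          ∑ z ∈ Finset.univ.filter (fun z : ↥α → Bool => z s = x), τ.2 α z} := by
    refine ⟨u_single, fun β _ => ⟨fun z => p_nonneg β z, ?_, fun s x => ?_⟩⟩
    · show ∑ z : ↥β → Bool, p β z = 1
      simp only [hp]
      exact bethe_unif_sum β
    · show u ↑s x = ∑ z ∈ Finset.univ.filter (fun z : ↥β → Bool => z s = x), p β z
      rw [p_marg β s x]
  have hQmem : Q ∈ {τ : (V → Bool → ℝ) × (∀ α : Finset V, (↥α → Bool) → ℝ) |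
      (∀ s, (∀ x, 0 ≤ τ.1 s x) ∧ ∑ x, τ.1 s x = 1) ∧
      ∀ α ∈ F, (∀ z, 0 ≤ τ.2 α z) ∧ (∑ z, τ.2 α z = 1) ∧
        ∀ s : ↥α, ∀ x, τ.1 s.1 x =
          ∑ z ∈ Finset.univ.filter (fun z : ↥α → Bool => z s = x), τ.2 α z} := by
    refine ⟨u_single, fun β hβ => ?_⟩
    rcases eq_or_ne β α with rfl | hβα
    · have h2 : Q.2 β = q := by
        show Function.update p β q β = q
        exact Function.update_self _ _ _
      rw [h2]
      exact ⟨q_nonneg, q_sum, fun s x => by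
        show u ↑s x = _
        rw [q_marg s x]⟩
    · have h2 : Q.2 β = p β := by
        show Function.update p α q β = p β
        exact Function.update_of_ne hβα _ _
      rw [h2]
      refine ⟨fun z => p_nonneg β z, ?_, fun s x => ?_⟩
      · simp only [hp]
        exact bethe_unif_sum β
      · show u ↑s x = _
        rw [p_marg β s x]
  have key := hconc.2 hPmem hQmem (by norm_num : (0:ℝ) ≤ 1/2)
    (by norm_num : (0:ℝ) ≤ 1/2) (by norm_num : (1/2:ℝ) + 1/2 = 1)
  simp only [] at key
  -- the midpoint factor marginal
  set mα : (↥α → Bool) → ℝ := fun z => (p α z + q z)/2 with hmα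
  -- components of the midpoint
  set R : (V → Bool → ℝ) × (∀ β : Finset V, (↥β → Bool) → ℝ) :=
    (1/2 : ℝ) • P + (1/2 : ℝ) • Q with hR
  have hR1 : R.1 = u := by
    funext s x
    rw [hR, hP, hQ]
    simp only [Prod.smul_fst, Prod.fst_add, Prod.smul_mk, Prod.mk_add_mk,
      Pi.add_apply, Pi.smul_apply, smul_eq_mul]
    rw [hu]
    norm_num
  have hR2ne : ∀ β, β ≠ α → R.2 β = p β := by
    intro β hβ
    funext z
    rw [hR, hP, hQ]
    simp only [Prod.snd_add, Prod.smul_snd, Prod.smul_mk, Prod.mk_add_mk,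
      Pi.add_apply, Pi.smul_apply, smul_eq_mul, Function.update_of_ne hβ]
    ring
  have hR2α : R.2 α = mα := by
    funext z
    rw [hR, hP, hQ, hmα]
    simp only [Prod.snd_add, Prod.smul_snd, Prod.smul_mk, Prod.mk_add_mk,
      Pi.add_apply, Pi.smul_apply, smul_eq_mul, Function.update_self]
    ring
  -- evaluation of the objective on points of the slice
  set A : ℝ := ∑ s, ρv s * (-∑ x, u s x * Real.log (u s x)) with hA
  set B : ℝ := ∑ β ∈ F.erase α, ρf β * (-∑ z, p β z * Real.log (p β z)) with hB
  set Ent : ((↥α → Bool) → ℝ) → ℝ := fun w => -∑ z, w z * Real.log (w z) with hEnt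
  have evalgen : ∀ X : (V → Bool → ℝ) × (∀ β : Finset V, (↥β → Bool) → ℝ),
      X.1 = u → (∀ β, β ≠ α → X.2 β = p β) →
      (∑ s, ρv s * (-∑ x, X.1 s x * Real.log (X.1 s x)) +
        ∑ β ∈ F, ρf β * (-∑ z, X.2 β z * Real.log (X.2 β z)))
        = A + B + ρf α * Ent (X.2 α) := by
    intro X h1 h2
    rw [h1, ← hA]
    rw [← Finset.sum_erase_add F _ hα]
    have hBsum : ∑ β ∈ F.erase α, ρf β * (-∑ z, X.2 β z * Real.log (X.2 β z)) = B := by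
      rw [hB]
      refine Finset.sum_congr rfl fun β hβ => ?_
      rw [h2 β (Finset.ne_of_mem_erase hβ)]
    rw [hBsum, hEnt]
    ring
  have eP := evalgen P (by rw [hP]) (fun β _ => by rw [hP])
  have eQ := evalgen Q (by rw [hQ]) (fun β hβ => by
    show Function.update p α q β = p β
    exact Function.update_of_ne hβ _ _)
  have eR := evalgen R hR1 hR2ne
  rw [eP, eQ, eR, hR2α] at key
  have hQ2α : Q.2 α = q := by
    show Function.update p α q α = q
    exact Function.update_self _ _ _
  have hP2α : P.2 α = p α := rfl
  rw [hQ2α, hP2α, smul_eq_mul, smul_eq_mul] at key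
  -- strict gain in entropy at the midpoint
  have ent_eq : ∀ w : (↥α → Bool) → ℝ, Ent w = ∑ z, Real.negMulLog (w z) := by
    intro w
    rw [hEnt]
    simp only [Real.negMulLog, neg_mul]
    rw [Finset.sum_neg_distrib]
  have hc : (0:ℝ) < ((Fintype.card (↥α → Bool) : ℝ))⁻¹ := by positivity
  have hD : Ent (p α) / 2 + Ent q / 2 < Ent mα := by
    rw [ent_eq, ent_eq, ent_eq, Finset.sum_div, Finset.sum_div,
      ← Finset.sum_add_distrib]
    apply Finset.sum_lt_sum
    · intro z _
      have hcc := Real.concaveOn_negMulLog.2 (Set.mem_Ici.mpr (p_nonneg α z))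
        (Set.mem_Ici.mpr (q_nonneg z)) (by norm_num : (0:ℝ) ≤ 1/2)
        (by norm_num : (0:ℝ) ≤ 1/2) (by norm_num)
      simp only [smul_eq_mul] at hcc
      have hm : mα z = 1/2 * p α z + 1/2 * q z := by rw [hmα]; ring
      rw [hm]
      linarith
    · refine ⟨(fun t => decide (t.1 = s₁)), Finset.mem_univ _, ?_⟩
      have hq0 : q (fun t => decide (t.1 = s₁)) = 0 := by
        simp only [hq]
        rw [if_neg]
        rintro (h | h)
        · have h' := congrFun h ⟨s₀, hs₀⟩
          simp only [decide_eq_true_eq] at h'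
          exact hne h'
        · have h' := congrFun h ⟨s₁, hs₁⟩
          simp at h'
      have hpz : p α (fun t => decide (t.1 = s₁))
          = (Fintype.card (↥α → Bool) : ℝ)⁻¹ := rfl
      have hmz : mα (fun t => decide (t.1 = s₁))
          = (Fintype.card (↥α → Bool) : ℝ)⁻¹ / 2 := by
        simp only [hmα]
        rw [hpz, hq0]; ring
      rw [hq0, hpz, hmz]
      simp only [Real.negMulLog_zero, Real.negMulLog]
      rw [Real.log_div (ne_of_gt hc) (by norm_num : (2:ℝ) ≠ 0)]
      have hlog2 : 0 < Real.log 2 := Real.log_pos (by norm_num)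
      nlinarith [mul_pos hc hlog2]
  by_contra hneg
  push_neg at hneg
  nlinarith [key, hD, hneg]
end

section
/- Let c₁, …, c_K ∈ ℝ and define ζ(m,n) = c₁ ζ₁(m) + Σ_{k=2}^K c_k ζ_k(m,n) with ζ₁ and ζ_k as in the symmetric binary pseudomarginal family. If ζ is concave on a neighborhood (within its domain) of the segment {(0,n) : 0 ≤ n < 1}, then Σ_{k=1}^K c_k ≥ 0. -/
open scoped Classical

noncomputable section

/-- `η(t) = t log t`. -/
def eta (t : ℝ) : ℝ := t * Real.log t

/-- `ζ₁(m) = −η((1+m)/2) − η((1−m)/2)`. -/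
def zeta1 (m : ℝ) : ℝ := -eta ((1 + m) / 2) - eta ((1 - m) / 2)

/-- The entropy `ζ_k(m,n)` of the symmetric binary pseudomarginal family for a factor of
size `k`. -/
def zetak (k : ℕ) (m n : ℝ) : ℝ :=
  -eta ((1 + (2 : ℝ) ^ (k - 1) * m + ((2 : ℝ) ^ (k - 1) - 1) * n) / 2 ^ k)
    - eta ((1 - (2 : ℝ) ^ (k - 1) * m + ((2 : ℝ) ^ (k - 1) - 1) * n) / 2 ^ k)
    - ((2 : ℝ) ^ k - 2) * eta ((1 - n) / 2 ^ k)

/-- The symmetric second difference of `eta`. -/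
def EE (x d : ℝ) : ℝ := eta (x + d) + eta (x - d) - 2 * eta x

/-- The common value of the two symmetric arguments at `m = 0`. -/
def XX (k : ℕ) (n : ℝ) : ℝ := (1 + ((2 : ℝ) ^ (k - 1) - 1) * n) / 2 ^ k

open Filter Topology Set

lemma EE_bounds {x d : ℝ} (hd : 0 < d) (hx : 2 * d < x) :
    d ^ 2 * (x - 2 * d) / (x ^ 2 - d ^ 2) ≤ EE x d ∧
      EE x d ≤ d ^ 2 * (x + d) / (x * (x - d)) := by
  have hx0 : 0 < x := by linarith
  have hxd : 0 < x - d := by linarith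
  have hxd' : 0 < x + d := by linarith
  have hE : EE x d = x * (Real.log (x + d) + Real.log (x - d) - 2 * Real.log x)
      + d * (Real.log (x + d) - Real.log (x - d)) := by
    simp only [EE, eta]; ring
  have h1 : Real.log (x + d) + Real.log (x - d) - 2 * Real.log x
      = Real.log ((x + d) * (x - d) / x ^ 2) := by
    rw [Real.log_div (by positivity) (by positivity),
      Real.log_mul (by positivity) (by positivity), Real.log_pow]
    push_cast; ring
  have h2 : Real.log (x + d) - Real.log (x - d) = Real.log ((x + d) / (x - d)) := by
    rw [Real.log_div (by positivity) (by positivity)]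
  have q1 : (0:ℝ) < (x + d) * (x - d) / x ^ 2 := by positivity
  have q2 : (0:ℝ) < (x + d) / (x - d) := by positivity
  have b1 := Real.log_le_sub_one_of_pos q1
  have b2 := Real.one_sub_inv_le_log_of_pos q1
  have b3 := Real.log_le_sub_one_of_pos q2
  have b4 := Real.one_sub_inv_le_log_of_pos q2
  rw [hE, h1, h2]
  constructor
  · have lo : x * (1 - ((x + d) * (x - d) / x ^ 2)⁻¹) + d * (1 - ((x + d) / (x - d))⁻¹)
        = d ^ 2 * (x - 2 * d) / (x ^ 2 - d ^ 2) := by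
      have h3 : (0:ℝ) < x ^ 2 - d ^ 2 := by nlinarith
      field_simp [h3.ne']
      ring
    rw [← lo]
    gcongr
  · have hi : x * ((x + d) * (x - d) / x ^ 2 - 1) + d * ((x + d) / (x - d) - 1)
        = d ^ 2 * (x + d) / (x * (x - d)) := by
      field_simp
      ring
    rw [← hi]
    gcongr


lemma EE_tendsto {x : ℝ} (hx : 0 < x) :
    Tendsto (fun d => EE x d / d ^ 2) (𝓝[>] (0:ℝ)) (𝓝 (1 / x)) := by
  have hlo : Tendsto (fun d : ℝ => (x - 2 * d) / (x ^ 2 - d ^ 2)) (𝓝[>] (0:ℝ)) (𝓝 (1 / x)) := by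
    have hc : ContinuousAt (fun d : ℝ => (x - 2 * d) / (x ^ 2 - d ^ 2)) 0 := by
      apply ContinuousAt.div (by fun_prop) (by fun_prop)
      norm_num
      intro h; nlinarith
    have h0 : (x - 2 * (0:ℝ)) / (x ^ 2 - (0:ℝ) ^ 2) = 1 / x := by
      field_simp
      ring
    have := hc.tendsto.mono_left (nhdsWithin_le_nhds (s := Set.Ioi (0:ℝ)))
    rw [← h0]; exact this
  have hhi : Tendsto (fun d : ℝ => (x + d) / (x * (x - d))) (𝓝[>] (0:ℝ)) (𝓝 (1 / x)) := by
    have hc : ContinuousAt (fun d : ℝ => (x + d) / (x * (x - d))) 0 := by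
      apply ContinuousAt.div (by fun_prop) (by fun_prop)
      norm_num
      intro h; nlinarith
    have h0 : (x + (0:ℝ)) / (x * (x - 0)) = 1 / x := by
      field_simp
      simp [hx.ne']
    have := hc.tendsto.mono_left (nhdsWithin_le_nhds (s := Set.Ioi (0:ℝ)))
    rw [← h0]; exact this
  apply tendsto_of_tendsto_of_tendsto_of_le_of_le' hlo hhi
  · filter_upwards [Ioo_mem_nhdsGT_of_mem (⟨le_refl 0, by linarith⟩ : (0:ℝ) ∈ Ico 0 (x/2))]
      with d hd
    have h1 := (EE_bounds hd.1 (by linarith [hd.2])).1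
    have hd2 : (0:ℝ) < d ^ 2 := pow_pos hd.1 2
    rw [le_div_iff₀ hd2]
    calc (x - 2 * d) / (x ^ 2 - d ^ 2) * d ^ 2
        = d ^ 2 * (x - 2 * d) / (x ^ 2 - d ^ 2) := by ring
      _ ≤ EE x d := h1
  · filter_upwards [Ioo_mem_nhdsGT_of_mem (⟨le_refl 0, by linarith⟩ : (0:ℝ) ∈ Ico 0 (x/2))]
      with d hd
    have h1 := (EE_bounds hd.1 (by linarith [hd.2])).2
    have hd2 : (0:ℝ) < d ^ 2 := pow_pos hd.1 2
    rw [div_le_iff₀ hd2]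
    calc EE x d ≤ d ^ 2 * (x + d) / (x * (x - d)) := h1
      _ = (x + d) / (x * (x - d)) * d ^ 2 := by ring


lemma zetak_eq {k : ℕ} (hk : 1 ≤ k) (m n : ℝ) :
    zetak k m n = -eta (XX k n + m / 2) - eta (XX k n - m / 2)
      - ((2 : ℝ) ^ k - 2) * eta ((1 - n) / 2 ^ k) := by
  obtain ⟨j, rfl⟩ : ∃ j, k = j + 1 := ⟨k - 1, (Nat.succ_pred_eq_of_pos hk).symm⟩
  unfold zetak XX
  simp only [Nat.add_sub_cancel]
  have e1 : (1 + (2:ℝ) ^ j * m + ((2:ℝ) ^ j - 1) * n) / 2 ^ (j + 1)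
      = (1 + ((2:ℝ) ^ j - 1) * n) / 2 ^ (j + 1) + m / 2 := by
    rw [pow_succ]
    have h2 : ((2:ℝ) ^ j) ≠ 0 := by positivity
    field_simp
    ring
  have e2 : (1 - (2:ℝ) ^ j * m + ((2:ℝ) ^ j - 1) * n) / 2 ^ (j + 1)
      = (1 + ((2:ℝ) ^ j - 1) * n) / 2 ^ (j + 1) - m / 2 := by
    rw [pow_succ]
    have h2 : ((2:ℝ) ^ j) ≠ 0 := by positivity
    field_simp
    ring
  rw [e1, e2]


lemma zeta1_eq (m n : ℝ) : zeta1 m = zetak 1 m n := by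
  norm_num [zeta1, zetak]


lemma zetak_pair {k : ℕ} (hk : 1 ≤ k) (m n : ℝ) :
    zetak k m n + zetak k (-m) n = 2 * zetak k 0 n - 2 * EE (XX k n) (m / 2) := by
  rw [zetak_eq hk m n, zetak_eq hk (-m) n, zetak_eq hk 0 n]
  have e1 : XX k n + -m / 2 = XX k n - m / 2 := by ring
  have e2 : XX k n - -m / 2 = XX k n + m / 2 := by ring
  have e3 : XX k n + 0 / 2 = XX k n := by ring
  have e4 : XX k n - 0 / 2 = XX k n := by ring
  rw [e1, e2, e3, e4]
  unfold EE
  ring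


lemma XX_pos {k : ℕ} {n : ℝ} (hn : 0 ≤ n) : 0 < XX k n := by
  have h1 : (1:ℝ) ≤ (2:ℝ) ^ (k - 1) := one_le_pow₀ (by norm_num)
  have h2 : (0:ℝ) ≤ ((2:ℝ) ^ (k - 1) - 1) * n := mul_nonneg (by linarith) hn
  apply div_pos (by linarith) (by positivity)


lemma XX_one {k : ℕ} (hk : 1 ≤ k) : XX k 1 = 1 / 2 := by
  obtain ⟨j, rfl⟩ : ∃ j, k = j + 1 := ⟨k - 1, (Nat.succ_pred_eq_of_pos hk).symm⟩
  unfold XX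
  simp only [Nat.add_sub_cancel, mul_one, pow_succ]
  have h2 : ((2:ℝ) ^ j) ≠ 0 := by positivity
  field_simp
  ring


/-- If `ζ(m,n) = c₁ ζ₁(m) + Σ_{k=2}^K c_k ζ_k(m,n)` is concave on an open neighborhood of
the segment `{(0,n) : 0 ≤ n < 1}`, then `Σ_{k=1}^K c_k ≥ 0`. -/
theorem stmt19 (K : ℕ) (c : ℕ → ℝ) (S : Set (ℝ × ℝ)) (hopen : IsOpen S)
    (hseg : ∀ n : ℝ, 0 ≤ n → n < 1 → ((0 : ℝ), n) ∈ S)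
    (hconc : ConcaveOn ℝ S
      (fun p => c 1 * zeta1 p.1 + ∑ k ∈ Finset.Icc 2 K, c k * zetak k p.1 p.2)) :
    0 ≤ ∑ k ∈ Finset.Icc 1 K, c k := by
  rcases Nat.eq_zero_or_pos K with hK | hK
  · subst hK; simp
  obtain ⟨F, hF⟩ : ∃ F : ℝ × ℝ → ℝ,
      F = fun p => c 1 * zeta1 p.1 + ∑ k ∈ Finset.Icc 2 K, c k * zetak k p.1 p.2 := ⟨_, rfl⟩
  rw [← hF] at hconc
  have hsplit : ∀ g : ℕ → ℝ,
      ∑ k ∈ Finset.Icc 1 K, g k = g 1 + ∑ k ∈ Finset.Icc 2 K, g k := by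
    intro g
    have h1 : Finset.Icc 1 K = insert 1 (Finset.Icc 2 K) := by
      ext a
      simp only [Finset.mem_Icc, Finset.mem_insert]
      omega
    rw [h1, Finset.sum_insert (by simp)]
  -- Step 1: for each n in [0,1), the limiting second-derivative inequality
  have key1 : ∀ n : ℝ, 0 ≤ n → n < 1 →
      0 ≤ ∑ k ∈ Finset.Icc 1 K, c k * (1 / XX k n) := by
    intro n hn0 hn1
    obtain ⟨ε, hε, hball⟩ := Metric.isOpen_iff.mp hopen _ (hseg n hn0 hn1)
    have hmem : ∀ m : ℝ, |m| < ε → ((m, n) : ℝ × ℝ) ∈ S := by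
      intro m hm
      apply hball
      rw [Metric.mem_ball, Prod.dist_eq]
      simp [Real.dist_eq, hm, hε]
    -- symmetric second difference identity
    have hid : ∀ m : ℝ, F (m, n) + F (-m, n)
        = 2 * F (0, n) - ∑ k ∈ Finset.Icc 1 K, c k * (2 * EE (XX k n) (m / 2)) := by
      intro m
      simp only [hF]
      rw [hsplit (fun k => c k * (2 * EE (XX k n) (m / 2)))]
      have hcomb2 : (∑ k ∈ Finset.Icc 2 K, c k * zetak k m n)
          + (∑ k ∈ Finset.Icc 2 K, c k * zetak k (-m) n)
          = (∑ k ∈ Finset.Icc 2 K, 2 * (c k * zetak k 0 n))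
            - ∑ k ∈ Finset.Icc 2 K, c k * (2 * EE (XX k n) (m / 2)) := by
        rw [← Finset.sum_add_distrib, ← Finset.sum_sub_distrib]
        apply Finset.sum_congr rfl
        intro k hk
        have hk1 : 1 ≤ k := le_trans (by norm_num) (Finset.mem_Icc.mp hk).1
        linear_combination c k * zetak_pair hk1 m n
      have h2S : ∑ k ∈ Finset.Icc 2 K, 2 * (c k * zetak k 0 n)
          = 2 * ∑ k ∈ Finset.Icc 2 K, c k * zetak k 0 n := by
        rw [Finset.mul_sum]
      rw [h2S] at hcomb2
      have hz1 := zetak_pair (le_refl 1) m n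
      rw [← zeta1_eq m n, ← zeta1_eq (-m) n, ← zeta1_eq 0 n] at hz1
      linear_combination c 1 * hz1 + hcomb2
    -- concavity gives nonnegativity of the second-difference combination
    have hQ : ∀ d : ℝ, 0 < d → 2 * d < ε →
        0 ≤ ∑ k ∈ Finset.Icc 1 K, c k * EE (XX k n) d := by
      intro d hd hdε
      have hm1 : ((2 * d, n) : ℝ × ℝ) ∈ S :=
        hmem _ (by rw [abs_of_pos (by linarith)]; linarith)
      have hm2 : ((-(2 * d), n) : ℝ × ℝ) ∈ S :=
        hmem _ (by rw [abs_neg, abs_of_pos (by linarith)]; linarith)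
      have hcomb := hconc.2 hm1 hm2 (by norm_num : (0:ℝ) ≤ 1/2)
        (by norm_num : (0:ℝ) ≤ 1/2) (by norm_num : (1:ℝ)/2 + 1/2 = 1)
      have hpt : ((1:ℝ)/2) • ((2 * d, n) : ℝ × ℝ) + ((1:ℝ)/2) • ((-(2 * d), n) : ℝ × ℝ)
          = ((0:ℝ), n) := by
        simp [Prod.ext_iff, smul_eq_mul]
        ring
      rw [hpt] at hcomb
      simp only [smul_eq_mul] at hcomb
      have hcomb' : 1/2 * F (2 * d, n) + 1/2 * F (-(2 * d), n) ≤ F (0, n) := hcomb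
      have hid2 := hid (2 * d)
      have hdd : (2 * d) / 2 = d := by ring
      rw [hdd] at hid2
      have h2E : ∑ k ∈ Finset.Icc 1 K, c k * (2 * EE (XX k n) d)
          = 2 * ∑ k ∈ Finset.Icc 1 K, c k * EE (XX k n) d := by
        rw [Finset.mul_sum]
        apply Finset.sum_congr rfl
        intros; ring
      rw [h2E] at hid2
      linarith [hcomb', hid2]
    -- take d → 0⁺
    have hT : Tendsto (fun d => ∑ k ∈ Finset.Icc 1 K, c k * (EE (XX k n) d / d ^ 2))
        (𝓝[>] (0:ℝ)) (𝓝 (∑ k ∈ Finset.Icc 1 K, c k * (1 / XX k n))) := by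
      apply tendsto_finset_sum
      intro k hk
      exact (EE_tendsto (XX_pos hn0)).const_mul (c k)
    apply ge_of_tendsto hT
    filter_upwards [Ioo_mem_nhdsGT_of_mem
      (⟨le_refl 0, half_pos hε⟩ : (0:ℝ) ∈ Set.Ico 0 (ε/2))] with d hd
    have h0 := hQ d hd.1 (by linarith [hd.2])
    have heq : ∑ k ∈ Finset.Icc 1 K, c k * (EE (XX k n) d / d ^ 2)
        = (∑ k ∈ Finset.Icc 1 K, c k * EE (XX k n) d) / d ^ 2 := by
      rw [Finset.sum_div]
      apply Finset.sum_congr rfl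
      intros; ring
    rw [heq]
    exact div_nonneg h0 (by positivity)
  -- Step 2: take n → 1⁻
  have hT2 : Tendsto (fun n => ∑ k ∈ Finset.Icc 1 K, c k * (1 / XX k n))
      (𝓝[<] (1:ℝ)) (𝓝 (∑ k ∈ Finset.Icc 1 K, c k * 2)) := by
    apply tendsto_finset_sum
    intro k hk
    have hk1 : 1 ≤ k := (Finset.mem_Icc.mp hk).1
    have hcont : ContinuousAt (fun n : ℝ => 1 / XX k n) 1 := by
      apply ContinuousAt.div continuousAt_const
      · unfold XX; fun_prop
      · rw [XX_one hk1]; norm_num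
    have h := (hcont.tendsto.mono_left (nhdsWithin_le_nhds (s := Set.Iio (1:ℝ)))).const_mul (c k)
    have h2 : (1 : ℝ) / XX k 1 = 2 := by rw [XX_one hk1]; norm_num
    rw [h2] at h
    exact h
  have hfin : 0 ≤ ∑ k ∈ Finset.Icc 1 K, c k * 2 := by
    apply ge_of_tendsto hT2
    filter_upwards [Ioo_mem_nhdsLT_of_mem
      (⟨zero_lt_one, le_refl 1⟩ : (1:ℝ) ∈ Set.Ioc 0 1)] with n hn
    exact key1 n hn.1.le hn.2
  rw [← Finset.sum_mul] at hfin
  linarith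

end
end
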